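/- Let ω ≥ 2 and let a_0, a_1, …, a_ω be nonnegative integers. Let H be the (ω; a_0, …, a_ω)-clique-star and set α = ω + Σ_{i=0}^{ω} a_i (its independence number). Let K be a CRG all of whose vertices are black and all of whose edges are white or gray. Suppose that either (i) some vertex of K has at least α gray neighbors, or (ii) there exist distinct vertices v_1, …, v_ω of K, pairwise joined by gray edges, such that for i = 1, …, ω−1 the vertex v_i has at least α−1 gray neighbors, and v_ω has at least ⌊(α−ω)/ω⌋ + ω − 1 gray neighbors. Then H embeds in K. -/

import Mathlib

/-- Colors for edges of a colored regularity graph. -/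
inductive EColor : Type
  | white
  | gray
  | black
deriving DecidableEq

/-- A colored regularity graph (CRG) on a finite vertex type `V`: each vertex is
white or black (`vWhite v = true` means white), and each pair of distinct vertices
gets a symmetric edge color (white, gray or black). -/
structure CRG (V : Type) [Fintype V] where
  vWhite : V → Bool
  ecolor : V → V → EColor
  ecolor_symm : ∀ u v, ecolor u v = ecolor v u

namespace CRG

variable {V : Type} [Fintype V] [DecidableEq V]

/-- The matrix `M_K(p)`. -/
noncomputable def M (K : CRG V) (p : ℝ) (u v : V) : ℝ :=
  if u = v then (if K.vWhite u then p else 1 - p)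
  else
    match K.ecolor u v with
    | EColor.white => p
    | EColor.black => 1 - p
    | EColor.gray => 0

/-- The function `g_K(p)`: the minimum of `xᵀ M_K(p) x` over nonnegative weight
vectors summing to `1`. -/
noncomputable def g (K : CRG V) (p : ℝ) : ℝ :=
  sInf {r : ℝ | ∃ x : V → ℝ, (∀ v, 0 ≤ x v) ∧ (∑ v, x v) = 1 ∧
    r = ∑ u, ∑ v, x u * K.M p u v * x v}

/-- The sub-CRG induced on a subset `s` of the vertices. -/
def sub (K : CRG V) (s : Finset V) : CRG {v // v ∈ s} where
  vWhite := fun v => K.vWhite v.1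
  ecolor := fun u v => K.ecolor u.1 v.1
  ecolor_symm := fun u v => K.ecolor_symm u.1 v.1

/-- `K` is `p`-core if `g_K(p) < g_{K'}(p)` for every proper (nonempty) sub-CRG `K'`. -/
def IsPCore (K : CRG V) (p : ℝ) : Prop :=
  ∀ s : Finset V, s.Nonempty → s ≠ Finset.univ → K.g p < (K.sub s).g p

/-- `x` is an optimal weight vector for `K` at `p`. -/
def IsOptWeight (K : CRG V) (p : ℝ) (x : V → ℝ) : Prop :=
  (∀ v, 0 ≤ x v) ∧ (∑ v, x v) = 1 ∧
    (∑ u, ∑ v, x u * K.M p u v * x v) = K.g p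

/-- The gray degree `d_G(v)`: total weight of gray neighbors of `v`. -/
noncomputable def dG (K : CRG V) (x : V → ℝ) (v : V) : ℝ :=
  ∑ w ∈ Finset.univ.filter fun w => w ≠ v ∧ K.ecolor v w = EColor.gray, x w

/-- The white degree `d_W(v)`: total weight of white neighbors of `v`, including `v`
itself if `v` is white. -/
noncomputable def dW (K : CRG V) (x : V → ℝ) (v : V) : ℝ :=
  (∑ w ∈ Finset.univ.filter fun w => w ≠ v ∧ K.ecolor v w = EColor.white, x w) +
    (if K.vWhite v then x v else 0)

/-- The black degree `d_B(v)`: total weight of black neighbors of `v`, including `v`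
itself if `v` is black. -/
noncomputable def dB (K : CRG V) (x : V → ℝ) (v : V) : ℝ :=
  (∑ w ∈ Finset.univ.filter fun w => w ≠ v ∧ K.ecolor v w = EColor.black, x w) +
    (if K.vWhite v then 0 else x v)

/-- The number of gray neighbors of `v`. -/
def grayDeg (K : CRG V) (v : V) : ℕ :=
  (Finset.univ.filter fun w => w ≠ v ∧ K.ecolor v w = EColor.gray).card

end CRG

/-- A graph `H` embeds in a CRG `K`, written `H ↦ K`. -/
def EmbedsIn {α : Type*} {V : Type} [Fintype V] (H : SimpleGraph α) (K : CRG V) : Prop :=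
  ∃ φ : α → V,
    (∀ a b : α, H.Adj a b →
      (φ a = φ b ∧ K.vWhite (φ a) = false) ∨
      (φ a ≠ φ b ∧ (K.ecolor (φ a) (φ b) = EColor.black ∨ K.ecolor (φ a) (φ b) = EColor.gray))) ∧
    (∀ a b : α, a ≠ b → ¬H.Adj a b →
      (φ a = φ b ∧ K.vWhite (φ a) = true) ∨
      (φ a ≠ φ b ∧ (K.ecolor (φ a) (φ b) = EColor.white ∨ K.ecolor (φ a) (φ b) = EColor.gray)))

/-- `H` is the `(ω; a 0, a 1, …, a ω)`-clique-star: its vertices split into a clique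
`W = {w 1, …, w ω}` and an independent set (the complement of `W`), each `w i` has
exactly `a i + 1` neighbors outside `W` and these neighborhoods are pairwise disjoint,
and exactly `a 0` vertices outside `W` are isolated. -/
def IsCliqueStar {β : Type*} (H : SimpleGraph β) (ω : ℕ) (a : Fin (ω + 1) → ℕ) : Prop :=
  ∃ w : Fin ω → β, Function.Injective w ∧
    (∀ i j : Fin ω, i ≠ j → H.Adj (w i) (w j)) ∧
    (∀ u v : β, u ∉ Set.range w → v ∉ Set.range w → ¬H.Adj u v) ∧
    (∀ i j : Fin ω, i ≠ j → ∀ v : β, v ∉ Set.range w →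
      ¬(H.Adj (w i) v ∧ H.Adj (w j) v)) ∧
    (∀ i : Fin ω, {v : β | v ∉ Set.range w ∧ H.Adj (w i) v}.ncard = a i.succ + 1) ∧
    {v : β | v ∉ Set.range w ∧ ∀ u : β, ¬H.Adj v u}.ncard = a 0


lemma exists_disjoint_subsets {V : Type*} [DecidableEq V] :
    ∀ (n : ℕ) (T : Fin n → Finset V) (d : Fin n → ℕ),
      (∀ i, ∑ j, d j ≤ (T i).card) →
      ∃ S : Fin n → Finset V, (∀ i, S i ⊆ T i) ∧ (∀ i, (S i).card = d i) ∧
        ∀ i j, i ≠ j → Disjoint (S i) (S j) := by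
  intro n
  induction n with
  | zero =>
      intro T d _
      exact ⟨fun i => i.elim0, fun i => i.elim0, fun i => i.elim0, fun i => i.elim0⟩
  | succ n ih =>
      intro T d h
      have hd0 : d 0 ≤ (T 0).card := by
        refine le_trans ?_ (h 0)
        exact Finset.single_le_sum (f := d) (fun _ _ => Nat.zero_le _) (Finset.mem_univ 0)
      obtain ⟨S0, hS0T, hS0card⟩ := Finset.exists_subset_card_eq hd0
      have hcond : ∀ j : Fin n, ∑ k : Fin n, d k.succ ≤ ((T j.succ \ S0)).card := by
        intro j
        have h1 := h j.succ
        rw [Fin.sum_univ_succ] at h1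
        have h2 := Finset.le_card_sdiff S0 (T j.succ)
        omega
      obtain ⟨S', hS'T, hS'card, hS'disj⟩ := ih (fun j => T j.succ \ S0) (fun j => d j.succ) hcond
      refine ⟨Fin.cons S0 S', ?_, ?_, ?_⟩
      · intro i
        refine Fin.cases ?_ ?_ i
        · simpa using hS0T
        · intro j
          simpa using (hS'T j).trans (Finset.sdiff_subset)
      · intro i
        refine Fin.cases ?_ ?_ i
        · simpa using hS0card
        · intro j; simpa using hS'card j
      · intro i j hij
        induction i using Fin.cases with
        | zero =>
            induction j using Fin.cases with
            | zero => exact absurd rfl hij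
            | succ j' =>
                simp only [Fin.cons_zero, Fin.cons_succ]
                exact ((Finset.sdiff_disjoint).mono_left (hS'T j')).symm
        | succ i' =>
            induction j using Fin.cases with
            | zero =>
                simp only [Fin.cons_zero, Fin.cons_succ]
                exact (Finset.sdiff_disjoint).mono_left (hS'T i')
            | succ j' =>
                simp only [Fin.cons_succ]
                exact hS'disj i' j' (fun hh => hij (by rw [hh]))

lemma exists_injOn_to {β : Type*} {V : Type*} [DecidableEq β] [DecidableEq V] [Nonempty V]
    (s : Finset β) (t : Finset V) (h : s.card ≤ t.card) :
    ∃ f : β → V, Set.InjOn f ↑s ∧ ∀ x ∈ s, f x ∈ t := by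
  obtain ⟨t', ht't, ht'card⟩ := Finset.exists_subset_card_eq h
  have e := Finset.equivOfCardEq (ht'card.symm : s.card = t'.card)
  classical
  refine ⟨fun x => if hx : x ∈ s then (e ⟨x, hx⟩ : V) else Classical.arbitrary V, ?_, ?_⟩
  · intro x hx y hy hxy
    simp only [Finset.mem_coe] at hx hy
    have hxy' : ((e ⟨x, hx⟩ : { z // z ∈ t' }) : V) = ((e ⟨y, hy⟩ : { z // z ∈ t' }) : V) := by
      simpa [dif_pos hx, dif_pos hy] using hxy
    have h2 := e.injective (Subtype.ext hxy')
    exact congrArg Subtype.val h2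
  · intro x hx
    simp only [dif_pos hx]
    exact ht't (e ⟨x, hx⟩).2
set_option maxHeartbeats 4000000 in
theorem cliqueStar_embeds {β : Type*} {V : Type} [Fintype β] [Fintype V] [DecidableEq V]
    (ω : ℕ) (hω : 2 ≤ ω) (a : Fin (ω + 1) → ℕ)
    (H : SimpleGraph β) (hH : IsCliqueStar H ω a)
    (α : ℕ) (hα : α = ω + ∑ i, a i)
    (K : CRG V)
    (hblack : ∀ v : V, K.vWhite v = false)
    (hedges : ∀ u v : V, u ≠ v → K.ecolor u v ≠ EColor.black)
    (hyp : (∃ v : V, α ≤ K.grayDeg v) ∨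
      (∃ vs : Fin ω → V, Function.Injective vs ∧
        (∀ i j : Fin ω, i ≠ j → K.ecolor (vs i) (vs j) = EColor.gray) ∧
        (∀ i : Fin ω, (i : ℕ) < ω - 1 → α - 1 ≤ K.grayDeg (vs i)) ∧
        (α - ω) / ω + ω - 1 ≤ K.grayDeg (vs ⟨ω - 1, by omega⟩))) :
    EmbedsIn H K := by
  classical
  obtain ⟨w, hwinj, hclique, hindep, hdisj, hcardA, hcardIso⟩ := hH
  set Abar : Fin ω → Finset β :=
    fun i => Finset.univ.filter (fun b => b ∉ Set.range w ∧ H.Adj (w i) b) with hAbar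
  set Iso : Finset β :=
    Finset.univ.filter (fun b => b ∉ Set.range w ∧ ∀ u, ¬H.Adj b u) with hIso
  have hmemA : ∀ i b, b ∈ Abar i ↔ (b ∉ Set.range w ∧ H.Adj (w i) b) := by
    intro i b; simp [hAbar]
  have hmemI : ∀ b, b ∈ Iso ↔ (b ∉ Set.range w ∧ ∀ u, ¬H.Adj b u) := by
    intro b; simp [hIso]
  have hAcard : ∀ i, (Abar i).card = a i.succ + 1 := by
    intro i
    have h1 := hcardA i
    rw [Set.ncard_eq_toFinset_card'] at h1
    rw [← h1, hAbar]
    congr 1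
    ext b
    simp [Set.mem_toFinset]
  have hIsoCard : Iso.card = a 0 := by
    have h1 := hcardIso
    rw [Set.ncard_eq_toFinset_card'] at h1
    rw [← h1, hIso]
    congr 1
    ext b
    simp [Set.mem_toFinset]
  have hclass : ∀ b : β, b ∉ Set.range w → (∃ i, b ∈ Abar i) ∨ b ∈ Iso := by
    intro b hb
    by_cases hiso : ∀ u, ¬H.Adj b u
    · exact Or.inr ((hmemI b).2 ⟨hb, hiso⟩)
    · push_neg at hiso
      obtain ⟨z, hz⟩ := hiso
      have hzw : z ∈ Set.range w := by
        by_contra hzw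
        exact hindep b z hb hzw hz
      obtain ⟨i, rfl⟩ := hzw
      exact Or.inl ⟨i, (hmemA i b).2 ⟨hb, hz.symm⟩⟩
  have huniq : ∀ b i j, b ∈ Abar i → b ∈ Abar j → i = j := by
    intro b i j hi hj
    by_contra hij
    exact hdisj i j hij b ((hmemA i b).1 hi).1 ⟨((hmemA i b).1 hi).2, ((hmemA j b).1 hj).2⟩
  have colorWG : ∀ x y : V, x ≠ y →
      (K.ecolor x y = EColor.white ∨ K.ecolor x y = EColor.gray) := by
    intro x y hxy
    cases hc : K.ecolor x y with
    | white => exact Or.inl rfl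
    | gray => exact Or.inr rfl
    | black => exact absurd hc (hedges x y hxy)
  have hdegV : ∀ v : V, K.grayDeg v + 1 ≤ Fintype.card V := by
    intro v
    have hsub : (Finset.univ.filter fun z => z ≠ v ∧ K.ecolor v z = EColor.gray) ⊆
        Finset.univ.erase v := by
      intro z hz
      simp only [Finset.mem_filter, Finset.mem_univ, true_and] at hz
      exact Finset.mem_erase.2 ⟨hz.1, Finset.mem_univ z⟩
    have h2 := Finset.card_le_card hsub
    rw [Finset.card_erase_of_mem (Finset.mem_univ v), Finset.card_univ] at h2
    have hpos : 0 < Fintype.card V := Fintype.card_pos_iff.2 ⟨v⟩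
    unfold CRG.grayDeg
    omega
  have hsumA : ∑ i : Fin (ω+1), a i = a 0 + ∑ i : Fin ω, a i.succ := Fin.sum_univ_succ a
  rcases hyp with ⟨v, hv⟩ | ⟨vs, hvsinj, hgray, hdegs, hdeglast⟩
  · -- Case (i)
    haveI : Nonempty V := ⟨v⟩
    set nonW : Finset β := Finset.univ.filter (fun b => b ∉ Set.range w) with hnonW
    have hmemnW : ∀ b : β, b ∈ nonW ↔ b ∉ Set.range w := by
      intro b
      rw [hnonW, Finset.mem_filter]
      simp
    have hunion : nonW = (Finset.univ.biUnion Abar) ∪ Iso := by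
      apply Finset.ext
      intro b
      rw [Finset.mem_union, Finset.mem_biUnion, hmemnW]
      constructor
      · intro hb
        rcases hclass b hb with ⟨i, hi⟩ | hi
        · exact Or.inl ⟨i, Finset.mem_univ i, hi⟩
        · exact Or.inr hi
      · rintro (⟨i, _, hi⟩ | hi)
        · exact ((hmemA i b).1 hi).1
        · exact ((hmemI b).1 hi).1
    have hdisjBU : Disjoint (Finset.univ.biUnion Abar) Iso := by
      rw [Finset.disjoint_left]
      intro b hb hbI
      obtain ⟨i, _, hi⟩ := Finset.mem_biUnion.1 hb
      exact ((hmemI b).1 hbI).2 (w i) (((hmemA i b).1 hi).2.symm)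
    have hcardBU : (Finset.univ.biUnion Abar).card = ∑ i : Fin ω, (a i.succ + 1) := by
      rw [Finset.card_biUnion]
      · exact Finset.sum_congr rfl (fun i _ => hAcard i)
      · intro i _ j _ hij
        change Disjoint (Abar i) (Abar j)
        rw [Finset.disjoint_left]
        intro b hbi hbj
        exact hij (huniq b i j hbi hbj)
    have hsplit : ∑ i : Fin ω, (a i.succ + 1) = (∑ i : Fin ω, a i.succ) + ω := by
      rw [Finset.sum_add_distrib]
      simp
    have hnonWcard : nonW.card = α := by
      rw [hunion, Finset.card_union_of_disjoint hdisjBU, hcardBU, hIsoCard, hsplit]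
      omega
    obtain ⟨f, hfinj, hfmem⟩ := exists_injOn_to nonW
      (Finset.univ.filter fun z => z ≠ v ∧ K.ecolor v z = EColor.gray)
      (by rw [hnonWcard]; exact hv)
    have hfmem' : ∀ b, b ∉ Set.range w → (f b ≠ v ∧ K.ecolor v (f b) = EColor.gray) := by
      intro b hb
      have h1 := hfmem b ((hmemnW b).2 hb)
      rw [Finset.mem_filter] at h1
      exact h1.2
    set φ : β → V := fun b => if b ∈ Set.range w then v else f b with hφ
    have hφW : ∀ b, b ∈ Set.range w → φ b = v := by
      intro b hb; rw [hφ]; exact if_pos hb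
    have hφn : ∀ b, b ∉ Set.range w → φ b = f b := by
      intro b hb; rw [hφ]; exact if_neg hb
    refine ⟨φ, ?_, ?_⟩
    · intro x y hxy
      by_cases hx : x ∈ Set.range w <;> by_cases hy : y ∈ Set.range w
      · rw [hφW x hx, hφW y hy]
        exact Or.inl ⟨rfl, hblack v⟩
      · rw [hφW x hx, hφn y hy]
        obtain ⟨h1, h2⟩ := hfmem' y hy
        exact Or.inr ⟨h1.symm, Or.inr h2⟩
      · rw [hφn x hx, hφW y hy]
        obtain ⟨h1, h2⟩ := hfmem' x hx
        refine Or.inr ⟨h1, Or.inr ?_⟩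
        rw [K.ecolor_symm]
        exact h2
      · exact absurd hxy (hindep x y hx hy)
    · intro x y hne hxy
      by_cases hx : x ∈ Set.range w <;> by_cases hy : y ∈ Set.range w
      · obtain ⟨i, rfl⟩ := hx
        obtain ⟨j, rfl⟩ := hy
        have hij : i ≠ j := fun h => hne (by rw [h])
        exact absurd (hclique i j hij) hxy
      · rw [hφW x hx, hφn y hy]
        obtain ⟨h1, h2⟩ := hfmem' y hy
        exact Or.inr ⟨h1.symm, colorWG v (f y) h1.symm⟩
      · rw [hφn x hx, hφW y hy]
        obtain ⟨h1, h2⟩ := hfmem' x hx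
        exact Or.inr ⟨h1, colorWG (f x) v h1⟩
      · rw [hφn x hx, hφn y hy]
        have hfne : f x ≠ f y := by
          intro h
          exact hne (hfinj (Finset.mem_coe.2 ((hmemnW x).2 hx)) (Finset.mem_coe.2 ((hmemnW y).2 hy)) h)
        exact Or.inr ⟨hfne, colorWG _ _ hfne⟩
  · -- Case (ii)
    haveI : Nonempty V := ⟨vs ⟨0, by omega⟩⟩
    set L : Fin ω := ⟨ω - 1, by omega⟩ with hL
    obtain ⟨i0, -, hi0min⟩ := Finset.exists_min_image (Finset.univ : Finset (Fin ω))
      (fun i : Fin ω => a i.succ) ⟨(⟨0, by omega⟩ : Fin ω), Finset.mem_univ _⟩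
    set π : Equiv.Perm (Fin ω) := Equiv.swap i0 L with hπ
    set u : Fin ω → V := fun i => vs (π i) with hu
    have huinj : Function.Injective u := fun i j h => π.injective (hvsinj h)
    have hugray : ∀ i j, i ≠ j → K.ecolor (u i) (u j) = EColor.gray := by
      intro i j hij
      exact hgray (π i) (π j) (fun h => hij (π.injective h))
    have hπi0 : π i0 = L := by rw [hπ]; exact Equiv.swap_apply_left i0 L
    have hu0 : u i0 = vs L := by simp only [hu]; rw [hπi0]
    have hdeg_min : (α - ω) / ω + ω - 1 ≤ K.grayDeg (u i0) := by
      rw [hu0, hL]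
      exact hdeglast
    have hdeg_other : ∀ i, i ≠ i0 → α - 1 ≤ K.grayDeg (u i) := by
      intro i hi
      apply hdegs
      have hne : π i ≠ L := by
        rw [← hπi0]
        exact fun h => hi (π.injective h)
      have h1 : (π i : ℕ) < ω := (π i).isLt
      have h2 : (π i : ℕ) ≠ ω - 1 := by
        intro h
        exact hne (Fin.ext h)
      omega
    have hNsum : (∑ i : Fin ω, a i.succ) + a 0 + ω = α := by omega
    have hmin : a i0.succ * ω ≤ α - ω := by
      have h1 : ∑ _i : Fin ω, a i0.succ ≤ ∑ i : Fin ω, a i.succ :=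
        Finset.sum_le_sum (fun i _ => hi0min i (Finset.mem_univ i))
      rw [Finset.sum_const, Finset.card_univ, Fintype.card_fin, smul_eq_mul] at h1
      have h2 : ω * a i0.succ = a i0.succ * ω := Nat.mul_comm _ _
      omega
    have hminq : a i0.succ ≤ (α - ω) / ω := (Nat.le_div_iff_mul_le (by omega)).2 hmin
    set Vs : Finset V := Finset.image vs Finset.univ with hVs
    have hVscard : Vs.card = ω := by
      rw [hVs, Finset.card_image_of_injective _ hvsinj, Finset.card_univ, Fintype.card_fin]
    have huVs : ∀ i, u i ∈ Vs := by
      intro i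
      simp only [hu, hVs]
      exact Finset.mem_image_of_mem vs (Finset.mem_univ (π i))
    set N : Fin ω → Finset V :=
      fun i => Finset.univ.filter (fun z => z ≠ u i ∧ K.ecolor (u i) z = EColor.gray) with hN
    have hNcard : ∀ i, (N i).card = K.grayDeg (u i) := fun i => rfl
    have hNmem : ∀ i z, z ∈ N i ↔ (z ≠ u i ∧ K.ecolor (u i) z = EColor.gray) := by
      intro i z
      simp only [hN, Finset.mem_filter, Finset.mem_univ, true_and]
    set T : Fin ω → Finset V := fun i => N i \ Vs with hT
    have hTmem : ∀ i z, z ∈ T i ↔ (z ∈ N i ∧ z ∉ Vs) := by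
      intro i z
      simp only [hT]
      exact Finset.mem_sdiff
    have hTcard : ∀ i, K.grayDeg (u i) ≤ (T i).card + (ω - 1) := by
      intro i
      have hsub : N i ⊆ T i ∪ Vs.erase (u i) := by
        intro z hz
        rw [Finset.mem_union]
        by_cases hzV : z ∈ Vs
        · exact Or.inr (Finset.mem_erase.2 ⟨((hNmem i z).1 hz).1, hzV⟩)
        · exact Or.inl ((hTmem i z).2 ⟨hz, hzV⟩)
      have h1 := Finset.card_le_card hsub
      have h2 := Finset.card_union_le (T i) (Vs.erase (u i))
      have h3 : (Vs.erase (u i)).card = ω - 1 := by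
        rw [Finset.card_erase_of_mem (huVs i), hVscard]
      rw [← hNcard i]
      omega
    have hcardV : α ≤ Fintype.card V := by
      obtain ⟨i1, hi1⟩ : ∃ i1 : Fin ω, i1 ≠ i0 := by
        rcases eq_or_ne (⟨0, by omega⟩ : Fin ω) i0 with h | h
        · refine ⟨⟨1, by omega⟩, ?_⟩
          rw [← h]
          intro hc
          have h2 := Fin.ext_iff.1 hc
          simp at h2
        · exact ⟨_, h⟩
      have h1 := hdeg_other i1 hi1
      have h2 := hdegV (u i1)
      omega
    have hspex : ∀ i, ∃ b, b ∈ Abar i := by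
      intro i
      have h1 := hAcard i
      have h2 : 0 < (Abar i).card := by omega
      obtain ⟨b, hb⟩ := Finset.card_pos.1 h2
      exact ⟨b, hb⟩
    choose sp hsp using hspex
    have hS0ex : a i0.succ ≤ (T i0).card := by
      have h1 := hTcard i0
      omega
    obtain ⟨S0, hS0T, hS0card⟩ := Finset.exists_subset_card_eq hS0ex
    set e : Fin (ω+1) → ℕ := fun k =>
      if h : (k : ℕ) < ω then
        (if (⟨(k : ℕ), h⟩ : Fin ω) = i0 then 0 else a (⟨(k : ℕ), h⟩ : Fin ω).succ)
      else a 0 with he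
    set G : Fin (ω+1) → Finset V := fun k =>
      if h : (k : ℕ) < ω then
        (if (⟨(k : ℕ), h⟩ : Fin ω) = i0 then Finset.univ else T (⟨(k : ℕ), h⟩ : Fin ω) \ S0)
      else Finset.univ \ (Vs ∪ S0) with hG
    have hcastval : ∀ i : Fin ω, ((i.castSucc : Fin (ω+1)) : ℕ) < ω := by
      intro i
      simpa using i.isLt
    have hcasteq : ∀ i : Fin ω, (⟨((i.castSucc : Fin (ω+1)) : ℕ), hcastval i⟩ : Fin ω) = i := by
      intro i
      apply Fin.ext
      simp
    have heC : ∀ i : Fin ω, e i.castSucc = if i = i0 then 0 else a i.succ := by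
      intro i
      simp only [he]
      rw [dif_pos (hcastval i), hcasteq i]
    have hGC : ∀ i : Fin ω, G i.castSucc = if i = i0 then Finset.univ else T i \ S0 := by
      intro i
      simp only [hG]
      rw [dif_pos (hcastval i), hcasteq i]
    have hlastval : ¬ ((Fin.last ω : Fin (ω+1)) : ℕ) < ω := by simp
    have heL : e (Fin.last ω) = a 0 := by
      simp only [he]
      rw [dif_neg hlastval]
    have hGL : G (Fin.last ω) = Finset.univ \ (Vs ∪ S0) := by
      simp only [hG]
      rw [dif_neg hlastval]
    have hesum : (∑ k : Fin (ω+1), e k) + a i0.succ = (∑ i : Fin ω, a i.succ) + a 0 := by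
      have h0 : ∑ k : Fin (ω+1), e k = (∑ i : Fin ω, e i.castSucc) + e (Fin.last ω) :=
        Fin.sum_univ_castSucc e
      have h1 : ∑ i : Fin ω, e i.castSucc = ∑ i : Fin ω, (if i = i0 then 0 else a i.succ) :=
        Finset.sum_congr rfl (fun i _ => heC i)
      have h2 : (∑ i ∈ Finset.univ.erase i0, (if i = i0 then 0 else a i.succ)) + 0
          = ∑ i : Fin ω, (if i = i0 then 0 else a i.succ) := by
        have h2' := Finset.sum_erase_add Finset.univ
          (fun i : Fin ω => if i = i0 then 0 else a i.succ) (Finset.mem_univ i0)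
        rw [show (if i0 = i0 then 0 else a i0.succ) = 0 from if_pos rfl] at h2'
        exact h2'
      have h3 : (∑ i ∈ Finset.univ.erase i0, a i.succ) + a i0.succ = ∑ i : Fin ω, a i.succ :=
        Finset.sum_erase_add Finset.univ (fun i : Fin ω => a i.succ) (Finset.mem_univ i0)
      have h4 : ∑ i ∈ Finset.univ.erase i0, (if i = i0 then 0 else a i.succ)
          = ∑ i ∈ Finset.univ.erase i0, a i.succ := by
        apply Finset.sum_congr rfl
        intro i hi
        rw [if_neg (Finset.mem_erase.1 hi).1]
      rw [h0, h1, heL]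
      omega
    have hecond : ∀ k, (∑ j : Fin (ω+1), e j) ≤ (G k).card := by
      intro k
      by_cases h : (k : ℕ) < ω
      · have hGk : G k = if (⟨(k : ℕ), h⟩ : Fin ω) = i0 then Finset.univ
            else T (⟨(k : ℕ), h⟩ : Fin ω) \ S0 := by
          simp only [hG]
          rw [dif_pos h]
        by_cases hii : (⟨(k : ℕ), h⟩ : Fin ω) = i0
        · rw [hGk, if_pos hii, Finset.card_univ]
          omega
        · rw [hGk, if_neg hii]
          have h1 := Finset.le_card_sdiff S0 (T (⟨(k : ℕ), h⟩ : Fin ω))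
          have h2 := hTcard (⟨(k : ℕ), h⟩ : Fin ω)
          have h3 := hdeg_other _ hii
          omega
      · have hGk : G k = Finset.univ \ (Vs ∪ S0) := by
          simp only [hG]
          rw [dif_neg h]
        rw [hGk]
        have h1 := Finset.le_card_sdiff (Vs ∪ S0) Finset.univ
        have h2 := Finset.card_union_le Vs S0
        rw [Finset.card_univ] at h1
        omega
    obtain ⟨S', hS'G, hS'card, hS'disj⟩ := exists_disjoint_subsets (ω+1) G e hecond
    set B : Fin ω → Finset V := fun i => if i = i0 then S0 else S' i.castSucc with hB
    set C : Finset V := S' (Fin.last ω) with hC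
    have hBi0 : B i0 = S0 := by
      simp only [hB]
      exact if_pos trivial
    have hBne : ∀ i, i ≠ i0 → B i = S' i.castSucc := by
      intro i hii
      simp only [hB]
      rw [if_neg hii]
    have hBcard : ∀ i, (B i).card = a i.succ := by
      intro i
      by_cases hii : i = i0
      · subst hii
        rw [hBi0, hS0card]
      · rw [hBne i hii, hS'card, heC, if_neg hii]
    have hBT : ∀ i, B i ⊆ T i := by
      intro i
      by_cases hii : i = i0
      · subst hii
        rw [hBi0]
        exact hS0T
      · rw [hBne i hii]
        refine (hS'G i.castSucc).trans ?_
        rw [hGC i, if_neg hii]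
        exact Finset.sdiff_subset
    have hBS0 : ∀ i, i ≠ i0 → Disjoint (B i) S0 := by
      intro i hii
      rw [hBne i hii]
      refine Finset.disjoint_left.2 (fun z hz hz0 => ?_)
      have h1 := hS'G i.castSucc hz
      rw [hGC i, if_neg hii] at h1
      exact (Finset.mem_sdiff.1 h1).2 hz0
    have hBdisj : ∀ i j, i ≠ j → Disjoint (B i) (B j) := by
      intro i j hij
      by_cases hii : i = i0
      · subst hii
        rw [hBi0]
        exact (hBS0 j (Ne.symm hij)).symm
      · by_cases hjj : j = i0
        · subst hjj
          rw [hBi0]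
          exact hBS0 i hii
        · rw [hBne i hii, hBne j hjj]
          exact hS'disj _ _ (fun h => hij (Fin.castSucc_injective ω h))
    have hCsub : C ⊆ Finset.univ \ (Vs ∪ S0) := by
      rw [hC, ← hGL]
      exact hS'G _
    have hCcard : C.card = a 0 := by
      rw [hC, hS'card, heL]
    have hCVs : ∀ z, z ∈ C → z ∉ Vs := by
      intro z hz
      have h1 := hCsub hz
      rw [Finset.mem_sdiff, Finset.mem_union] at h1
      exact fun hzv => h1.2 (Or.inl hzv)
    have hBC : ∀ i, Disjoint (B i) C := by
      intro i
      by_cases hii : i = i0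
      · subst hii
        rw [hBi0]
        refine Finset.disjoint_left.2 (fun z hz hzC => ?_)
        have h1 := hCsub hzC
        rw [Finset.mem_sdiff, Finset.mem_union] at h1
        exact h1.2 (Or.inr hz)
      · rw [hBne i hii, hC]
        exact hS'disj _ _ (Fin.castSucc_lt_last i).ne
    have hBmem : ∀ i z, z ∈ B i → (z ∉ Vs ∧ z ≠ u i ∧ K.ecolor (u i) z = EColor.gray) := by
      intro i z hz
      have h1 := (hTmem i z).1 (hBT i hz)
      exact ⟨h1.2, (hNmem i z).1 h1.1⟩
    have hfiex : ∀ i : Fin ω, ∃ f : β → V, Set.InjOn f ↑((Abar i).erase (sp i)) ∧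
        ∀ x ∈ (Abar i).erase (sp i), f x ∈ B i := by
      intro i
      apply exists_injOn_to
      rw [Finset.card_erase_of_mem (hsp i), hAcard i, hBcard i]
      omega
    choose fi hfiInj hfiMem using hfiex
    obtain ⟨fiso, hfisoInj, hfisoMem⟩ := exists_injOn_to Iso C (by rw [hIsoCard, hCcard])
    set φ : β → V := fun b =>
      if h : ∃ i, w i = b then u h.choose
      else if h2 : ∃ i, H.Adj (w i) b then
        (if b = sp h2.choose then u h2.choose else fi h2.choose b)
      else fiso b with hφ
    have hnotr : ∀ b : β, b ∉ Set.range w → ¬∃ i, w i = b := by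
      intro b hb h
      exact hb (Set.mem_range.2 h)
    have hφw : ∀ i, φ (w i) = u i := by
      intro i
      have hex : ∃ j, w j = w i := ⟨i, rfl⟩
      simp only [hφ]
      rw [dif_pos hex]
      exact congrArg u (hwinj hex.choose_spec)
    have hAchoose : ∀ i b, b ∈ Abar i → ∀ (h2 : ∃ j, H.Adj (w j) b), h2.choose = i := by
      intro i b hb h2
      have hj : b ∈ Abar h2.choose := (hmemA _ b).2 ⟨((hmemA i b).1 hb).1, h2.choose_spec⟩
      exact huniq b h2.choose i hj hb
    have hφsp : ∀ i, φ (sp i) = u i := by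
      intro i
      obtain ⟨hbr, hba⟩ := (hmemA i (sp i)).1 (hsp i)
      have h2 : ∃ j, H.Adj (w j) (sp i) := ⟨i, hba⟩
      simp only [hφ]
      rw [dif_neg (hnotr _ hbr), dif_pos h2, hAchoose i (sp i) (hsp i) h2, if_pos rfl]
    have hφA : ∀ i b, b ∈ Abar i → b ≠ sp i → φ b = fi i b := by
      intro i b hb hbs
      obtain ⟨hbr, hba⟩ := (hmemA i b).1 hb
      have h2 : ∃ j, H.Adj (w j) b := ⟨i, hba⟩
      simp only [hφ]
      rw [dif_neg (hnotr _ hbr), dif_pos h2, hAchoose i b hb h2, if_neg hbs]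
    have hφI : ∀ b, b ∈ Iso → φ b = fiso b := by
      intro b hb
      obtain ⟨hbr, hbi⟩ := (hmemI b).1 hb
      have h2 : ¬∃ j, H.Adj (w j) b := by
        rintro ⟨j, hj⟩
        exact hbi (w j) hj.symm
      simp only [hφ]
      rw [dif_neg (hnotr _ hbr), dif_neg h2]
    have hφAim : ∀ i b, b ∈ Abar i →
        (b = sp i ∧ φ b = u i) ∨
        (b ≠ sp i ∧ φ b ∈ B i ∧ φ b ≠ u i ∧ K.ecolor (u i) (φ b) = EColor.gray ∧ φ b ∉ Vs) := by
      intro i b hb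
      by_cases hbs : b = sp i
      · exact Or.inl ⟨hbs, by rw [hbs]; exact hφsp i⟩
      · have hf : φ b = fi i b := hφA i b hb hbs
        have hmem : fi i b ∈ B i := hfiMem i b (Finset.mem_erase.2 ⟨hbs, hb⟩)
        obtain ⟨h1, h2, h3⟩ := hBmem i _ hmem
        rw [← hf] at hmem h1 h2 h3
        exact Or.inr ⟨hbs, hmem, h2, h3, h1⟩
    have hφIim : ∀ b, b ∈ Iso → (φ b ∈ C ∧ φ b ∉ Vs) := by
      intro b hb
      rw [hφI b hb]
      have h1 := hfisoMem b hb
      exact ⟨h1, hCVs _ h1⟩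
    have hclassb : ∀ b : β, (∃ i, b = w i) ∨ (∃ i, b ∈ Abar i) ∨ b ∈ Iso := by
      intro b
      by_cases hb : b ∈ Set.range w
      · obtain ⟨i, hi⟩ := hb
        exact Or.inl ⟨i, hi.symm⟩
      · exact Or.inr (hclass b hb)
    have hkey : ∀ x y : β, x ≠ y → φ x = φ y → H.Adj x y := by
      intro x y hne heq
      rcases hclassb x with ⟨i, rfl⟩ | ⟨i, hxA⟩ | hxI <;>
        rcases hclassb y with ⟨j, rfl⟩ | ⟨j, hyA⟩ | hyI
      · rw [hφw i, hφw j] at heq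
        exact absurd (congrArg w (huinj heq)) hne
      · rw [hφw i] at heq
        rcases hφAim j y hyA with ⟨hysp, hyu⟩ | ⟨_, _, _, _, hyVs⟩
        · rw [hyu] at heq
          have hij : i = j := huinj heq
          subst hij
          exact ((hmemA i y).1 hyA).2
        · rw [← heq] at hyVs
          exact absurd (huVs i) hyVs
      · rw [hφw i] at heq
        have h1 := (hφIim y hyI).2
        rw [← heq] at h1
        exact absurd (huVs i) h1
      · rw [hφw j] at heq
        rcases hφAim i x hxA with ⟨hxsp, hxu⟩ | ⟨_, _, _, _, hxVs⟩
        · rw [hxu] at heq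
          have hij : i = j := huinj heq
          subst hij
          exact ((hmemA i x).1 hxA).2.symm
        · rw [heq] at hxVs
          exact absurd (huVs j) hxVs
      · rcases hφAim i x hxA with ⟨hxsp, hxu⟩ | ⟨hxs, hxB, _, _, hxVs⟩ <;>
          rcases hφAim j y hyA with ⟨hysp, hyu⟩ | ⟨hys, hyB, _, _, hyVs⟩
        · rw [hxu, hyu] at heq
          have hij : i = j := huinj heq
          subst hij
          rw [hxsp, hysp] at hne
          exact absurd rfl hne
        · rw [hxu] at heq
          rw [← heq] at hyVs
          exact absurd (huVs i) hyVs
        · rw [hyu] at heq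
          rw [heq] at hxVs
          exact absurd (huVs j) hxVs
        · by_cases hij : i = j
          · subst hij
            have hfeq : fi i x = fi i y := by
              rw [← hφA i x hxA hxs, ← hφA i y hyA hys]
              exact heq
            have hxy := hfiInj i
              (Finset.mem_coe.2 (Finset.mem_erase.2 ⟨hxs, hxA⟩))
              (Finset.mem_coe.2 (Finset.mem_erase.2 ⟨hys, hyA⟩)) hfeq
            exact absurd hxy hne
          · rw [heq] at hxB
            exact (Finset.disjoint_left.1 (hBdisj i j hij) hxB hyB).elim
      · have hyC := (hφIim y hyI).1
        rcases hφAim i x hxA with ⟨hxsp, hxu⟩ | ⟨hxs, hxB, _, _, hxVs⟩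
        · rw [hxu] at heq
          rw [← heq] at hyC
          exact absurd (huVs i) (hCVs _ hyC)
        · rw [← heq] at hyC
          exact absurd hyC (Finset.disjoint_left.1 (hBC i) hxB)
      · have hxC := (hφIim x hxI).1
        rw [heq, hφw j] at hxC
        exact absurd (huVs j) (hCVs _ hxC)
      · have hxC := (hφIim x hxI).1
        rcases hφAim j y hyA with ⟨hysp, hyu⟩ | ⟨hys, hyB, _, _, hyVs⟩
        · rw [hyu] at heq
          rw [heq] at hxC
          exact absurd (huVs j) (hCVs _ hxC)
        · rw [heq] at hxC
          exact absurd hxC (Finset.disjoint_left.1 (hBC j) hyB)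
      · exact absurd (hfisoInj (Finset.mem_coe.2 hxI) (Finset.mem_coe.2 hyI)
          (by rw [← hφI x hxI, ← hφI y hyI]; exact heq)) hne
    refine ⟨φ, ?_, ?_⟩
    · intro x y hadj
      rcases hclassb x with ⟨i, rfl⟩ | ⟨i, hxA⟩ | hxI
      · rcases hclassb y with ⟨j, rfl⟩ | ⟨j, hyA⟩ | hyI
        · have hij : i ≠ j := fun h => hadj.ne (by rw [h])
          rw [hφw i, hφw j]
          exact Or.inr ⟨fun h => hij (huinj h), Or.inr (hugray i j hij)⟩
        · have hyA' : y ∈ Abar i := (hmemA i y).2 ⟨((hmemA j y).1 hyA).1, hadj⟩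
          rcases hφAim i y hyA' with ⟨hysp, hyu⟩ | ⟨hys, hyB, hyne, hygr, _⟩
          · rw [hφw i, hyu]
            exact Or.inl ⟨rfl, hblack _⟩
          · rw [hφw i]
            exact Or.inr ⟨Ne.symm hyne, Or.inr hygr⟩
        · exact absurd hadj.symm (((hmemI y).1 hyI).2 (w i))
      · rcases hclassb y with ⟨j, rfl⟩ | ⟨j, hyA⟩ | hyI
        · have hxA' : x ∈ Abar j := (hmemA j x).2 ⟨((hmemA i x).1 hxA).1, hadj.symm⟩
          rcases hφAim j x hxA' with ⟨hxsp, hxu⟩ | ⟨hxs, hxB, hxne, hxgr, _⟩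
          · rw [hφw j, hxu]
            exact Or.inl ⟨rfl, hblack _⟩
          · rw [hφw j]
            refine Or.inr ⟨hxne, Or.inr ?_⟩
            rw [K.ecolor_symm]
            exact hxgr
        · exact absurd hadj (hindep x y ((hmemA i x).1 hxA).1 ((hmemA j y).1 hyA).1)
        · exact absurd hadj.symm (((hmemI y).1 hyI).2 x)
      · exact absurd hadj (((hmemI x).1 hxI).2 y)
    · intro x y hne hnadj
      have hfne : φ x ≠ φ y := fun h => hnadj (hkey x y hne h)
      exact Or.inr ⟨hfne, colorWG _ _ hfne⟩
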